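/- Let k be a field of characteristic 2, B an n×n matrix over k, and A the 2n×2n symmetric block matrix [[0,B],[Bᵀ,0]]. Then det(A + I_{2n}) = (per*(B))², where per*(B) = Σ_π ∏_{i∈dom(π)} B_{i,π(i)} is the partial permanent, the sum ranging over all injective partial maps π from {1,...,n} to {1,...,n}. -/

import Mathlib

/-- The partial permanent of an `n × n` matrix: the sum over all injective
partial maps `π` from `{1,…,n}` to itself of `∏_{i ∈ dom π} B i (π i)`
(the empty map contributes `1`). -/
noncomputable def partialPermanent {R : Type*} [CommRing R] {n : ℕ}
    (B : Matrix (Fin n) (Fin n) R) : R :=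
  ∑ S : Finset (Fin n), ∑ π : (↥S ↪ Fin n), ∏ i : ↥S, B i.1 (π i)

section Aux

open Matrix Finset

variable {k : Type*} [CommRing k] {n : ℕ}

def blkM (B : Matrix (Fin n) (Fin n) k) : Matrix (Fin n ⊕ Fin n) (Fin n ⊕ Fin n) k :=
  Matrix.fromBlocks 1 B B.transpose 1

lemma blkM_symm (B : Matrix (Fin n) (Fin n) k) (u v : Fin n ⊕ Fin n) :
    blkM B u v = blkM B v u := by
  cases u <;> cases v <;> simp [blkM, Matrix.one_apply, eq_comm]

noncomputable def sigmaFun {S : Finset (Fin n)} (π : ↥S ↪ Fin n) : Fin n ⊕ Fin n → Fin n ⊕ Fin n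
  | Sum.inl i => if h : i ∈ S then Sum.inr (π ⟨i, h⟩) else Sum.inl i
  | Sum.inr j => if h : ∃ x : ↥S, π x = j then Sum.inl (h.choose : Fin n) else Sum.inr j

lemma sigmaFun_inl_mem {S : Finset (Fin n)} (π : ↥S ↪ Fin n) (x : ↥S) :
    sigmaFun π (Sum.inl (x : Fin n)) = Sum.inr (π x) := by
  rw [sigmaFun]
  split
  · rfl
  · exact absurd x.coe_prop ‹_›

lemma sigmaFun_inl_not {S : Finset (Fin n)} (π : ↥S ↪ Fin n) {i : Fin n} (h : i ∉ S) :
    sigmaFun π (Sum.inl i) = Sum.inl i := by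
  rw [sigmaFun]; split
  · exact absurd ‹_› h
  · rfl

lemma sigmaFun_inr_eq {S : Finset (Fin n)} (π : ↥S ↪ Fin n) (x : ↥S) :
    sigmaFun π (Sum.inr (π x)) = Sum.inl (x : Fin n) := by
  rw [sigmaFun]
  split
  · next h =>
    exact congrArg (fun y : ↥S => (Sum.inl (y : Fin n) : Fin n ⊕ Fin n))
      (π.injective h.choose_spec)
  · next h => exact absurd ⟨x, rfl⟩ h

lemma sigmaFun_inr_not {S : Finset (Fin n)} (π : ↥S ↪ Fin n) {j : Fin n}
    (h : ¬ ∃ x : ↥S, π x = j) : sigmaFun π (Sum.inr j) = Sum.inr j := by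
  rw [sigmaFun]; split
  · exact absurd ‹_› h
  · rfl

lemma sigmaFun_involutive {S : Finset (Fin n)} (π : ↥S ↪ Fin n) :
    Function.Involutive (sigmaFun π) := by
  intro u
  rcases u with i | j
  · by_cases h : i ∈ S
    · rw [show (Sum.inl i : Fin n ⊕ Fin n) = Sum.inl ((⟨i, h⟩ : ↥S) : Fin n) from rfl,
        sigmaFun_inl_mem, sigmaFun_inr_eq]
    · rw [sigmaFun_inl_not π h, sigmaFun_inl_not π h]
  · by_cases h : ∃ x : ↥S, π x = j
    · obtain ⟨x, rfl⟩ := h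
      rw [sigmaFun_inr_eq, sigmaFun_inl_mem]
    · rw [sigmaFun_inr_not π h, sigmaFun_inr_not π h]

noncomputable def sigmaPerm {S : Finset (Fin n)} (π : ↥S ↪ Fin n) :
    Equiv.Perm (Fin n ⊕ Fin n) :=
  (sigmaFun_involutive π).toPerm _

@[simp] lemma sigmaPerm_apply {S : Finset (Fin n)} (π : ↥S ↪ Fin n) (u : Fin n ⊕ Fin n) :
    sigmaPerm π u = sigmaFun π u := rfl

lemma sigmaPerm_inv {S : Finset (Fin n)} (π : ↥S ↪ Fin n) :
    (sigmaPerm π)⁻¹ = sigmaPerm π := by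
  ext u
  simp [sigmaPerm, Equiv.Perm.inv_def]

lemma sigmaPerm_prod (B : Matrix (Fin n) (Fin n) k) {S : Finset (Fin n)} (π : ↥S ↪ Fin n) :
    ∏ u, blkM B (sigmaPerm π u) u = ∏ x : ↥S, (B x.1 (π x)) ^ 2 := by
  rw [Fintype.prod_sum_type]
  have h1 : (∏ i : Fin n, blkM B (sigmaPerm π (Sum.inl i)) (Sum.inl i))
      = ∏ x : ↥S, B x.1 (π x) := by
    have : ∀ i : Fin n, blkM B (sigmaPerm π (Sum.inl i)) (Sum.inl i)
        = if h : i ∈ S then B i (π ⟨i, h⟩) else 1 := by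
      intro i
      by_cases h : i ∈ S
      · rw [dif_pos h, sigmaPerm_apply,
          show (Sum.inl i : Fin n ⊕ Fin n) = Sum.inl ((⟨i, h⟩ : ↥S) : Fin n) from rfl,
          sigmaFun_inl_mem]
        simp [blkM]
      · rw [dif_neg h, sigmaPerm_apply, sigmaFun_inl_not π h]
        simp [blkM, Matrix.one_apply_eq]
    rw [Finset.prod_congr rfl fun i _ => this i, Fintype.prod_dite]
    rw [Finset.prod_const_one, mul_one]
    apply Finset.prod_congr
    · ext x
      simp [Finset.mem_attach]
    · intros; rfl
  have h2 : (∏ j : Fin n, blkM B (sigmaPerm π (Sum.inr j)) (Sum.inr j))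
      = ∏ x : ↥S, B x.1 (π x) := by
    have : ∀ j : Fin n, blkM B (sigmaPerm π (Sum.inr j)) (Sum.inr j)
        = if h : ∃ x : ↥S, π x = j then B (h.choose : Fin n) j else 1 := by
      intro j
      by_cases h : ∃ x : ↥S, π x = j
      · rw [dif_pos h]
        have hs := h.choose_spec
        rw [sigmaPerm_apply]
        conv_lhs => rw [← hs]
        rw [sigmaFun_inr_eq]
        simp [blkM, hs]
      · rw [dif_neg h, sigmaPerm_apply, sigmaFun_inr_not π h]
        simp [blkM, Matrix.one_apply_eq]
    rw [Finset.prod_congr rfl fun j _ => this j, Fintype.prod_dite]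
    rw [Finset.prod_const_one, mul_one]
    refine (Fintype.prod_equiv
      (⟨fun x => ⟨π x, x, rfl⟩, fun j => j.2.choose,
        fun x => π.injective (Exists.choose_spec (⟨x, rfl⟩ : ∃ y : ↥S, π y = π x)),
        fun j => Subtype.ext j.2.choose_spec⟩ : ↥S ≃ {j : Fin n // ∃ x : ↥S, π x = j})
      (fun x => B x.1 (π x))
      (fun a => B ((a.2).choose : Fin n) a.1) ?_).symm
    intro x
    have hex : ∃ y : ↥S, π y = π x := ⟨x, rfl⟩
    have hc : hex.choose = x := π.injective hex.choose_spec
    show B x.1 (π x) = B (hex.choose : Fin n) (π x)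
    rw [hc]
  rw [h1, h2, ← Finset.prod_mul_distrib]
  exact Finset.prod_congr rfl fun x _ => (sq _).symm

lemma sigmaPerm_inj {S S' : Finset (Fin n)} (π : ↥S ↪ Fin n) (π' : ↥S' ↪ Fin n)
    (h : sigmaPerm π = sigmaPerm π') :
    (⟨S, π⟩ : Σ T : Finset (Fin n), (↥T ↪ Fin n)) = ⟨S', π'⟩ := by
  have hmem : ∀ T : Finset (Fin n), ∀ ρ : ↥T ↪ Fin n, ∀ i : Fin n,
      i ∈ T ↔ (sigmaPerm ρ (Sum.inl i)).isRight := by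
    intro T ρ i
    constructor
    · intro hi
      rw [sigmaPerm_apply,
        show (Sum.inl i : Fin n ⊕ Fin n) = Sum.inl ((⟨i, hi⟩ : ↥T) : Fin n) from rfl,
        sigmaFun_inl_mem]
      rfl
    · intro hr
      by_contra hi
      rw [sigmaPerm_apply, sigmaFun_inl_not ρ hi] at hr
      simp at hr
  have hSS : S = S' := by
    ext i
    rw [hmem S π i, hmem S' π' i, h]
  subst hSS
  have : π = π' := by
    ext x
    have h1 : sigmaPerm π (Sum.inl (x : Fin n)) = sigmaPerm π' (Sum.inl (x : Fin n)) := by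
      rw [h]
    rw [sigmaPerm_apply, sigmaPerm_apply, sigmaFun_inl_mem, sigmaFun_inl_mem] at h1
    exact congrArg Fin.val (by simpa using h1)
  rw [this]

lemma prod_perm_inv (B : Matrix (Fin n) (Fin n) k) (σ : Equiv.Perm (Fin n ⊕ Fin n)) :
    ∏ u, blkM B (σ⁻¹ u) u = ∏ u, blkM B (σ u) u := by
  rw [← Equiv.prod_comp σ (fun u => blkM B (σ⁻¹ u) u)]
  refine Finset.prod_congr rfl fun v _ => ?_
  rw [Equiv.Perm.inv_def, Equiv.symm_apply_apply, blkM_symm]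

lemma not_range_prod_eq_zero (B : Matrix (Fin n) (Fin n) k)
    (σ : Equiv.Perm (Fin n ⊕ Fin n)) (hinv : σ⁻¹ = σ)
    (hgood : ¬ ∃ p : Σ T : Finset (Fin n), (↥T ↪ Fin n), sigmaPerm p.2 = σ) :
    ∏ u, blkM B (σ u) u = 0 := by
  by_contra h0
  have hfac : ∀ u, blkM B (σ u) u ≠ 0 := by
    intro u hu
    exact h0 (Finset.prod_eq_zero (Finset.mem_univ u) hu)
  have hσσ : ∀ u, σ (σ u) = u := by
    intro u
    nth_rewrite 1 [← hinv]
    exact σ.symm_apply_apply u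
  have hll : ∀ i j : Fin n, σ (Sum.inl i) = Sum.inl j → j = i := by
    intro i j hij
    have := hfac (Sum.inl i)
    rw [hij] at this
    simp only [blkM, Matrix.fromBlocks_apply₁₁] at this
    by_contra hne
    exact this (Matrix.one_apply_ne hne)
  have hrr : ∀ i j : Fin n, σ (Sum.inr i) = Sum.inr j → j = i := by
    intro i j hij
    have := hfac (Sum.inr i)
    rw [hij] at this
    simp only [blkM, Matrix.fromBlocks_apply₂₂] at this
    by_contra hne
    exact this (Matrix.one_apply_ne hne)
  have hcross : ∀ x : ↥(Finset.univ.filter (fun i => σ (Sum.inl i) ≠ Sum.inl i)),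
      ∃ j : Fin n, σ (Sum.inl (x : Fin n)) = Sum.inr j := by
    intro x
    have hx : σ (Sum.inl (x : Fin n)) ≠ Sum.inl (x : Fin n) := (Finset.mem_filter.mp x.2).2
    rcases hsx : σ (Sum.inl (x : Fin n)) with j | j
    · exact absurd (by rw [hll _ _ hsx] at hsx; exact hsx) hx
    · exact ⟨j, rfl⟩
  choose π hπspec using hcross
  have hπinj : Function.Injective π := by
    intro x y hxy
    have : σ (Sum.inl (x : Fin n)) = σ (Sum.inl (y : Fin n)) := by
      rw [hπspec x, hπspec y, hxy]
    exact Subtype.ext (Sum.inl_injective (σ.injective this))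
  refine hgood ⟨⟨Finset.univ.filter (fun i => σ (Sum.inl i) ≠ Sum.inl i), ⟨π, hπinj⟩⟩, ?_⟩
  ext u
  rcases u with i | j
  · by_cases hi : i ∈ Finset.univ.filter (fun i => σ (Sum.inl i) ≠ Sum.inl i)
    · rw [sigmaPerm_apply,
        show (Sum.inl i : Fin n ⊕ Fin n)
          = Sum.inl ((⟨i, hi⟩ : ↥(Finset.univ.filter (fun i => σ (Sum.inl i) ≠ Sum.inl i)))
              : Fin n) from rfl,
        sigmaFun_inl_mem]
      exact (hπspec ⟨i, hi⟩).symm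
    · rw [sigmaPerm_apply, sigmaFun_inl_not _ hi]
      have hfix : σ (Sum.inl i) = Sum.inl i := by
        by_contra hne
        exact hi (Finset.mem_filter.mpr ⟨Finset.mem_univ i, hne⟩)
      exact hfix.symm
  · by_cases hj : ∃ x, π x = j
    · obtain ⟨x, rfl⟩ := hj
      rw [sigmaPerm_apply]
      have h2 : sigmaFun (⟨π, hπinj⟩ : _ ↪ Fin n) (Sum.inr (π x)) = Sum.inl (x : Fin n) :=
        sigmaFun_inr_eq (⟨π, hπinj⟩ : _ ↪ Fin n) x
      have h3 : σ (Sum.inr (π x)) = Sum.inl (x : Fin n) := by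
        rw [← hπspec x, hσσ]
      exact h2.trans h3.symm
    · have hj' : ¬ ∃ x, (⟨π, hπinj⟩ : _ ↪ Fin n) x = j := hj
      rw [sigmaPerm_apply, sigmaFun_inr_not _ hj']
      rcases hsj : σ (Sum.inr j) with i | j'
      · exfalso
        have hij : σ (Sum.inl i) = Sum.inr j := by rw [← hsj, hσσ]
        have hiS : i ∈ Finset.univ.filter (fun i => σ (Sum.inl i) ≠ Sum.inl i) :=
          Finset.mem_filter.mpr ⟨Finset.mem_univ i, by rw [hij]; simp⟩
        refine hj ⟨⟨i, hiS⟩, ?_⟩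
        have := hπspec ⟨i, hiS⟩
        rw [hij] at this
        exact (Sum.inr_injective this).symm
      · exact congrArg Sum.inr (hrr _ _ hsj).symm

end Aux

/-- Over a field of characteristic 2, for an `n × n` matrix `B` and the
symmetric block matrix `A = [[0, B], [Bᵀ, 0]]`, one has
`det (A + I) = (per* B)²`. -/
theorem det_add_one_eq_partialPermanent_sq {k : Type*} [Field k] [CharP k 2]
    {n : ℕ} (B : Matrix (Fin n) (Fin n) k) :
    (Matrix.fromBlocks 0 B B.transpose 0 + 1).det = partialPermanent B ^ 2 := by
  have hM : Matrix.fromBlocks 0 B B.transpose 0 + 1 = blkM B := by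
    rw [← Matrix.fromBlocks_one, Matrix.fromBlocks_add]
    simp [blkM]
  rw [hM, Matrix.det_apply]
  have hsign : ∀ σ : Equiv.Perm (Fin n ⊕ Fin n),
      Equiv.Perm.sign σ • ∏ u, blkM B (σ u) u = ∏ u, blkM B (σ u) u := by
    intro σ
    rcases Int.units_eq_one_or (Equiv.Perm.sign σ) with h | h <;>
      rw [h] <;> simp [Units.smul_def, CharTwo.neg_eq]
  rw [Finset.sum_congr rfl fun σ _ => hsign σ]
  rw [← Finset.sum_filter_add_sum_filter_not Finset.univ (fun σ => σ⁻¹ = σ)]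
  have h2 : ∑ σ ∈ Finset.univ.filter (fun σ : Equiv.Perm (Fin n ⊕ Fin n) => ¬ σ⁻¹ = σ),
      ∏ u, blkM B (σ u) u = 0 := by
    refine Finset.sum_involution (fun a _ => a⁻¹) ?_ ?_ ?_ ?_
    · intro a _
      rw [prod_perm_inv]
      exact CharTwo.add_self_eq_zero _
    · intro a ha _
      exact (Finset.mem_filter.mp ha).2
    · intro a ha
      refine Finset.mem_filter.mpr ⟨Finset.mem_univ _, ?_⟩
      rw [inv_inv]
      intro hh
      exact (Finset.mem_filter.mp ha).2 hh.symm
    · intro a _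
      exact inv_inv a
  rw [h2, add_zero]
  have himg : Finset.univ.image
      (fun p : Σ T : Finset (Fin n), (↥T ↪ Fin n) => sigmaPerm p.2)
      ⊆ Finset.univ.filter (fun σ : Equiv.Perm (Fin n ⊕ Fin n) => σ⁻¹ = σ) := by
    intro σ hσ
    obtain ⟨p, _, rfl⟩ := Finset.mem_image.mp hσ
    exact Finset.mem_filter.mpr ⟨Finset.mem_univ _, sigmaPerm_inv p.2⟩
  have hzero : ∀ σ ∈ Finset.univ.filter (fun σ : Equiv.Perm (Fin n ⊕ Fin n) => σ⁻¹ = σ),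
      σ ∉ Finset.univ.image
        (fun p : Σ T : Finset (Fin n), (↥T ↪ Fin n) => sigmaPerm p.2) →
      ∏ u, blkM B (σ u) u = 0 := by
    intro σ hσ hnot
    refine not_range_prod_eq_zero B σ (Finset.mem_filter.mp hσ).2 ?_
    rintro ⟨p, hp⟩
    exact hnot (Finset.mem_image.mpr ⟨p, Finset.mem_univ p, hp⟩)
  rw [← Finset.sum_subset himg hzero]
  rw [Finset.sum_image (fun p _ q _ hpq => by
    rcases p with ⟨S, π⟩; rcases q with ⟨S', π'⟩; exact sigmaPerm_inj π π' hpq)]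
  rw [Finset.sum_congr rfl fun p _ => sigmaPerm_prod B p.2]
  rw [← Finset.univ_sigma_univ, Finset.sum_sigma]
  rw [partialPermanent, CharTwo.sum_sq]
  refine Finset.sum_congr rfl fun S _ => ?_
  rw [CharTwo.sum_sq]
  refine Finset.sum_congr rfl fun π _ => ?_
  rw [Finset.prod_pow]
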